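/- Let ‖·‖ be a norm on ℝⁿ and let ‖γ‖_* := sup_{‖w‖ ≤ 1} γᵀw denote its dual norm. For γ ∈ ℝⁿ and v ∈ ℝ define h_γ(w) := log(1 + exp(−γᵀw + v)). Then for every λ > 0 and every ŵ ∈ ℝⁿ: if ‖γ‖_* ≤ λ, then sup_{w ∈ ℝⁿ} { h_γ(w) − λ‖ŵ − w‖ } = h_γ(ŵ); and if ‖γ‖_* > λ, then sup_{w ∈ ℝⁿ} { h_γ(w) − λ‖ŵ − w‖ } = +∞. -/

import Mathlib

open scoped BigOperators

noncomputable section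

private lemma softplus_mono {a b : ℝ} (hab : a ≤ b) :
    Real.log (1 + Real.exp a) ≤ Real.log (1 + Real.exp b) := by
  apply Real.log_le_log (by positivity)
  exact (add_le_add_iff_left 1).2 (Real.exp_le_exp.2 hab)

private lemma softplus_lip (a b : ℝ) :
    Real.log (1 + Real.exp a) - Real.log (1 + Real.exp b) ≤ |a - b| := by
  rcases le_total a b with h | h
  · have := softplus_mono h
    have h0 : Real.log (1 + Real.exp a) - Real.log (1 + Real.exp b) ≤ 0 := by linarith
    exact h0.trans (abs_nonneg _)
  · have h1 : (1:ℝ) + Real.exp a ≤ Real.exp (a - b) * (1 + Real.exp b) := by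
      have he : Real.exp (a-b) * (1 + Real.exp b) = Real.exp (a-b) + Real.exp a := by
        rw [mul_add, ← Real.exp_add]; ring_nf
      rw [he]
      have h1e : (1:ℝ) ≤ Real.exp (a-b) := Real.one_le_exp (by linarith)
      linarith
    have h2 : Real.log (1 + Real.exp a) ≤ (a - b) + Real.log (1 + Real.exp b) := by
      calc Real.log (1 + Real.exp a) ≤ Real.log (Real.exp (a-b) * (1 + Real.exp b)) :=
            Real.log_le_log (by positivity) h1
        _ = (a - b) + Real.log (1 + Real.exp b) := by
            rw [Real.log_mul (Real.exp_ne_zero _) (by positivity), Real.log_exp]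
    have h3 : a - b ≤ |a - b| := le_abs_self _
    linarith

/-- Let `nrm` be a norm on `ℝⁿ` with dual norm
`‖γ‖_* = sup {γᵀw : nrm w ≤ 1}`, and let `h_γ(w) = log (1 + exp (-γᵀw + v))`.
Then for every `λ > 0` and every `ŵ`:
if `‖γ‖_* ≤ λ` then `sup_w { h_γ(w) - λ · nrm (ŵ - w) } = h_γ(ŵ)` (computed in `EReal`),
and if `‖γ‖_* > λ` then this supremum equals `+∞`. -/
theorem sup_softplus_sub_norm (n : ℕ) (nrm : (Fin n → ℝ) → ℝ)
    (hnrm_def : ∀ w, nrm w = 0 ↔ w = 0)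
    (hnrm_smul : ∀ (c : ℝ) (w : Fin n → ℝ), nrm (c • w) = |c| * nrm w)
    (hnrm_add : ∀ w w', nrm (w + w') ≤ nrm w + nrm w')
    (γ : Fin n → ℝ) (v : ℝ) (lam : ℝ) (hlam : 0 < lam) (what : Fin n → ℝ)
    (dualNrm : ℝ)
    (hdual : dualNrm = sSup {t : ℝ | ∃ w : Fin n → ℝ, nrm w ≤ 1 ∧ t = ∑ i, γ i * w i}) :
    (dualNrm ≤ lam →
      (⨆ w : Fin n → ℝ,
          ((Real.log (1 + Real.exp (-(∑ i, γ i * w i) + v)) - lam * nrm (what - w) : ℝ) : EReal))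
        = ((Real.log (1 + Real.exp (-(∑ i, γ i * what i) + v)) : ℝ) : EReal)) ∧
    (lam < dualNrm →
      (⨆ w : Fin n → ℝ,
          ((Real.log (1 + Real.exp (-(∑ i, γ i * w i) + v)) - lam * nrm (what - w) : ℝ) : EReal))
        = ⊤) := by
  classical
  set S := {t : ℝ | ∃ w : Fin n → ℝ, nrm w ≤ 1 ∧ t = ∑ i, γ i * w i} with hSdef
  -- basic norm facts
  have nrm_zero : nrm 0 = 0 := by
    have := hnrm_smul 0 0
    simpa using this
  have nrm_neg : ∀ w, nrm (-w) = nrm w := fun w => by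
    have := hnrm_smul (-1) w; simpa using this
  have nrm_nonneg : ∀ w, 0 ≤ nrm w := by
    intro w
    have h2 := hnrm_add w (-w)
    rw [add_neg_cancel, nrm_zero, nrm_neg] at h2
    linarith
  -- dot product linearity
  have dot_sub : ∀ a b : Fin n → ℝ,
      ∑ i, γ i * (a - b) i = (∑ i, γ i * a i) - ∑ i, γ i * b i := by
    intro a b; simp [mul_sub, Finset.sum_sub_distrib]
  have dot_smul : ∀ (c : ℝ) (a : Fin n → ℝ),
      ∑ i, γ i * (c • a) i = c * ∑ i, γ i * a i := by
    intro c a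
    rw [Finset.mul_sum]
    apply Finset.sum_congr rfl
    intro i _; simp [Pi.smul_apply]; ring
  have dot_neg : ∀ a : Fin n → ℝ, ∑ i, γ i * (-a) i = -∑ i, γ i * a i := by
    intro a; simp [Finset.sum_neg_distrib]
  -- subadditivity over sums
  have nrm_sum_le : ∀ (s : Finset (Fin n)) (f : Fin n → (Fin n → ℝ)),
      nrm (∑ i ∈ s, f i) ≤ ∑ i ∈ s, nrm (f i) := by
    intro s f
    induction s using Finset.induction_on with
    | empty => simp [nrm_zero]
    | insert _ _ hx ih =>
      rename_i a s'
      rw [Finset.sum_insert hx, Finset.sum_insert hx]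
      exact (hnrm_add _ _).trans (by linarith)
  -- upper bound: nrm w ≤ C * ‖w‖
  set C : ℝ := ∑ i, nrm (Pi.single i 1) with hC
  have hC0 : 0 ≤ C := Finset.sum_nonneg fun i _ => nrm_nonneg _
  have nrm_le : ∀ w : Fin n → ℝ, nrm w ≤ C * ‖w‖ := by
    intro w
    have hw : w = ∑ i, (w i) • (Pi.single i 1 : Fin n → ℝ) := by
      funext j
      simp [Pi.single_apply, Finset.sum_apply, Finset.sum_ite_eq', mul_comm]
    calc nrm w = nrm (∑ i, (w i) • (Pi.single i 1 : Fin n → ℝ)) := by rw [← hw]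
      _ ≤ ∑ i, nrm ((w i) • (Pi.single i 1 : Fin n → ℝ)) := nrm_sum_le _ _
      _ = ∑ i, |w i| * nrm (Pi.single i 1 : Fin n → ℝ) := by
          apply Finset.sum_congr rfl; intro i _; rw [hnrm_smul]
      _ ≤ ∑ i, ‖w‖ * nrm (Pi.single i 1 : Fin n → ℝ) := by
          apply Finset.sum_le_sum; intro i _
          exact mul_le_mul_of_nonneg_right
            (by simpa using norm_le_pi_norm w i) (nrm_nonneg _)
      _ = C * ‖w‖ := by
          rw [hC, Finset.sum_mul]
          exact Finset.sum_congr rfl fun i _ => mul_comm _ _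
  -- nrm is continuous
  have nrm_lip : ∀ a b : Fin n → ℝ, |nrm a - nrm b| ≤ C * ‖a - b‖ := by
    intro a b
    rw [abs_le]
    constructor
    · have h := hnrm_add (b - a) a
      have heq : b - a + a = b := by abel
      rw [heq] at h
      have h2 : nrm (b - a) ≤ C * ‖a - b‖ := by
        have heq2 : b - a = -(a - b) := by abel
        rw [heq2, nrm_neg]; exact nrm_le _
      linarith
    · have h := hnrm_add (a - b) b
      have heq : a - b + b = a := by abel
      rw [heq] at h
      have h2 : nrm (a - b) ≤ C * ‖a - b‖ := nrm_le _
      linarith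
  have hcont : Continuous nrm := by
    apply (LipschitzWith.of_dist_le_mul (K := C.toNNReal) ?_).continuous
    intro a b
    rw [Real.coe_toNNReal C hC0, Real.dist_eq, dist_eq_norm]
    exact nrm_lip a b
  -- lower bound: ∃ m > 0, m * ‖w‖ ≤ nrm w
  obtain ⟨m, hm, hlow⟩ : ∃ m > 0, ∀ w, m * ‖w‖ ≤ nrm w := by
    rcases Nat.eq_zero_or_pos n with hn | hn
    · refine ⟨1, one_pos, fun w => ?_⟩
      have : w = 0 := funext fun i => absurd i.2 (by omega)
      subst this; simp [nrm_zero]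
    · have hne : (Metric.sphere (0 : Fin n → ℝ) 1).Nonempty := by
        haveI : Nonempty (Fin n) := ⟨⟨0, hn⟩⟩
        refine ⟨fun _ => 1, ?_⟩
        rw [Metric.mem_sphere, dist_zero_right]
        simpa using pi_norm_const (1:ℝ) (ι := Fin n)
      obtain ⟨w₀, hw₀mem, hmin⟩ :=
        (isCompact_sphere (0 : Fin n → ℝ) 1).exists_isMinOn hne hcont.continuousOn
      have hw₀ : ‖w₀‖ = 1 := by simpa [Metric.mem_sphere, dist_zero_right] using hw₀mem
      have hw₀0 : w₀ ≠ 0 := by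
        intro h; rw [h] at hw₀; simp at hw₀
      have hmpos : 0 < nrm w₀ := by
        rcases (nrm_nonneg w₀).lt_or_eq with h | h
        · exact h
        · exact absurd ((hnrm_def w₀).1 h.symm) hw₀0
      refine ⟨nrm w₀, hmpos, fun w => ?_⟩
      rcases eq_or_ne w 0 with rfl | hw
      · simp [nrm_zero]
      · have hnw : 0 < ‖w‖ := norm_pos_iff.2 hw
        have hmem : ‖w‖⁻¹ • w ∈ Metric.sphere (0 : Fin n → ℝ) 1 := by
          simp [Metric.mem_sphere, dist_zero_right, norm_smul, abs_of_pos (inv_pos.2 hnw),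
            inv_mul_cancel₀ hnw.ne']
        have h2 : nrm w₀ ≤ nrm (‖w‖⁻¹ • w) := hmin hmem
        rw [hnrm_smul, abs_of_pos (inv_pos.2 hnw)] at h2
        have := mul_le_mul_of_nonneg_left h2 hnw.le
        rw [← mul_assoc, mul_inv_cancel₀ hnw.ne', one_mul] at this
        linarith [this]
  -- S is bounded above and nonempty
  have hSne : S.Nonempty := ⟨0, 0, by simp [nrm_zero], by simp⟩
  have hSB : BddAbove S := by
    refine ⟨(∑ i, |γ i|) / m, ?_⟩
    rintro t ⟨w, hw1, rfl⟩
    have h1 : ∑ i, γ i * w i ≤ (∑ i, |γ i|) * ‖w‖ := by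
      rw [Finset.sum_mul]
      apply Finset.sum_le_sum; intro i _
      calc γ i * w i ≤ |γ i * w i| := le_abs_self _
        _ = |γ i| * |w i| := abs_mul _ _
        _ ≤ |γ i| * ‖w‖ := mul_le_mul_of_nonneg_left
            (by simpa using norm_le_pi_norm w i) (abs_nonneg _)
    have h2 : ‖w‖ ≤ 1 / m := by
      have := (hlow w).trans hw1
      rw [le_div_iff₀ hm]; linarith
    have h3 : (∑ i, |γ i|) * ‖w‖ ≤ (∑ i, |γ i|) * (1 / m) :=
      mul_le_mul_of_nonneg_left h2 (Finset.sum_nonneg fun i _ => abs_nonneg _)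
    calc ∑ i, γ i * w i ≤ (∑ i, |γ i|) * (1 / m) := h1.trans h3
      _ = (∑ i, |γ i|) / m := by ring
  -- key inequality
  have hkey : ∀ u : Fin n → ℝ, (∑ i, γ i * u i) ≤ dualNrm * nrm u := by
    intro u
    rcases eq_or_ne u 0 with rfl | hu
    · have h0 : (0:ℝ) ∈ S := ⟨0, by simp [nrm_zero], by simp⟩
      have := le_csSup hSB h0
      rw [← hdual] at this
      simp [nrm_zero]
    · have hnu : 0 < nrm u := by
        rcases (nrm_nonneg u).lt_or_eq with h | h
        · exact h
        · exact absurd ((hnrm_def u).1 h.symm) hu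
      have hmem : ((nrm u)⁻¹ * ∑ i, γ i * u i) ∈ S := by
        refine ⟨(nrm u)⁻¹ • u, ?_, (dot_smul _ _).symm⟩
        rw [hnrm_smul, abs_of_pos (inv_pos.2 hnu), inv_mul_cancel₀ hnu.ne']
      have hle := le_csSup hSB hmem
      rw [← hdual] at hle
      have := mul_le_mul_of_nonneg_left hle hnu.le
      rw [← mul_assoc, mul_inv_cancel₀ hnu.ne', one_mul] at this
      linarith [this, mul_comm (nrm u) dualNrm]
  have hkey_abs : ∀ u : Fin n → ℝ, |∑ i, γ i * u i| ≤ dualNrm * nrm u := by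
    intro u
    rw [abs_le]
    refine ⟨?_, hkey u⟩
    have h := hkey (-u)
    rw [dot_neg, nrm_neg] at h
    linarith
  constructor
  · -- case dualNrm ≤ lam
    intro hle
    apply le_antisymm
    · apply iSup_le
      intro w
      rw [EReal.coe_le_coe_iff]
      have key := softplus_lip (-(∑ i, γ i * w i) + v) (-(∑ i, γ i * what i) + v)
      have heq : (-(∑ i, γ i * w i) + v) - (-(∑ i, γ i * what i) + v)
          = ∑ i, γ i * (what - w) i := by
        rw [dot_sub]; ring
      rw [heq] at key
      have habs : |∑ i, γ i * (what - w) i| ≤ lam * nrm (what - w) :=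
        (hkey_abs _).trans (mul_le_mul_of_nonneg_right hle (nrm_nonneg _))
      linarith
    · have h := le_iSup (fun w : Fin n → ℝ =>
        ((Real.log (1 + Real.exp (-(∑ i, γ i * w i) + v)) - lam * nrm (what - w) : ℝ) : EReal)) what
      simpa [sub_self, nrm_zero] using h
  · -- case lam < dualNrm
    intro hgt
    rw [iSup_eq_top]
    intro b hb
    obtain ⟨t, ⟨u, hu1, htu⟩, ht⟩ := exists_lt_of_lt_csSup hSne (hdual ▸ hgt)
    subst htu
    set T := ∑ i, γ i * u i with hT
    have key : ∀ c : ℝ, 0 ≤ c →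
        (c * (T - lam) + (v - ∑ i, γ i * what i) : ℝ) ≤
        Real.log (1 + Real.exp (-(∑ i, γ i * (what - c • u) i) + v))
          - lam * nrm (what - (what - c • u)) := by
      intro c hc
      have hdot : ∑ i, γ i * (what - c • u) i = (∑ i, γ i * what i) - c * T := by
        rw [dot_sub, dot_smul]
      have hneq : what - (what - c • u) = c • u := by abel
      have hn2 : nrm (what - (what - c • u)) = c * nrm u := by
        rw [hneq, hnrm_smul, abs_of_nonneg hc]
      have hlog : -(∑ i, γ i * (what - c • u) i) + v ≤
          Real.log (1 + Real.exp (-(∑ i, γ i * (what - c • u) i) + v)) := by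
        set x := -(∑ i, γ i * (what - c • u) i) + v with hx
        calc x = Real.log (Real.exp x) := (Real.log_exp x).symm
          _ ≤ Real.log (1 + Real.exp x) :=
            Real.log_le_log (Real.exp_pos x) (by linarith [Real.exp_pos x])
      rw [hn2]
      have hnu1 : lam * (c * nrm u) ≤ lam * c := by
        have h1 : c * nrm u ≤ c * 1 := mul_le_mul_of_nonneg_left hu1 hc
        nlinarith
      have hx2 : -(∑ i, γ i * (what - c • u) i) + v
          = c * T - (∑ i, γ i * what i) + v := by rw [hdot]; ring
      have hlog2 := hx2.symm.trans_le hlog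
      linarith
    obtain ⟨r, hbr, -⟩ := EReal.lt_iff_exists_real_btwn.1 hb
    set c : ℝ := max 0 ((r + 1 - (v - ∑ i, γ i * what i)) / (T - lam)) with hcdef
    have hc0 : 0 ≤ c := le_max_left _ _
    have hTl : 0 < T - lam := by linarith
    have hcb : r + 1 ≤ c * (T - lam) + (v - ∑ i, γ i * what i) := by
      have h1 : (r + 1 - (v - ∑ i, γ i * what i)) / (T - lam) ≤ c := le_max_right _ _
      have h2 := mul_le_mul_of_nonneg_right h1 hTl.le
      rw [div_mul_cancel₀ _ hTl.ne'] at h2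
      linarith
    refine ⟨what - c • u, ?_⟩
    have hval := key c hc0
    have hr : (r : EReal) <
        ((Real.log (1 + Real.exp (-(∑ i, γ i * (what - c • u) i) + v))
          - lam * nrm (what - (what - c • u)) : ℝ) : EReal) := by
      rw [EReal.coe_lt_coe_iff]
      linarith
    exact hbr.trans hr

end
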